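/- Let A be a real n×m matrix of rank n with columns a_1, …, a_m ∈ ℝ^n, let b ∈ ℝ^m, and let Γ be a real (m−n)×m matrix of rank m−n, with columns γ_1, …, γ_m ∈ ℝ^{m−n}, whose rows form a basis of {y ∈ ℝ^m : y_1 a_1 + ⋯ + y_m a_m = 0}. Suppose the polytope P = {x ∈ ℝ^n : ⟨a_i, x⟩ + b_i ≥ 0, 1 ≤ i ≤ m} is simple, i.e. for every x ∈ P the vectors {a_i : ⟨a_i, x⟩ + b_i = 0} are linearly independent. Then Γb is a regular value of the map μ_Γ : ℂ^m → ℝ^{m−n}, μ_Γ(z) = Σ_k |z_k|² γ_k: for every z ∈ ℂ^m with μ_Γ(z) = Γb, the real Fréchet derivative of μ_Γ at z is surjective. -/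

import Mathlib

open Matrix

theorem stmt_17 (n m : ℕ) (A : Matrix (Fin n) (Fin m) ℝ) (b : Fin m → ℝ)
    (Γ : Matrix (Fin (m - n)) (Fin m) ℝ)
    (hA : A.rank = n) (hΓrank : Γ.rank = m - n)
    (hind : LinearIndependent ℝ (fun j => Γ j))
    (hspan : (Submodule.span ℝ (Set.range fun j => Γ j) : Set (Fin m → ℝ)) =
      {y : Fin m → ℝ | ∑ k, y k • Aᵀ k = 0})
    (hsimple : ∀ x : Fin n → ℝ, (∀ i, 0 ≤ (∑ r, A r i * x r) + b i) →
      LinearIndependent ℝ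
        (fun i : {i : Fin m // (∑ r, A r i * x r) + b i = 0} => Aᵀ (i : Fin m))) :
    ∀ z : Fin m → ℂ, (∑ k, Complex.normSq (z k) • Γᵀ k) = Γ.mulVec b →
      Function.Surjective
        ⇑(fderiv ℝ (fun z : Fin m → ℂ => ∑ k, Complex.normSq (z k) • Γᵀ k) z) := by
  classical
  intro z hz
  -- each row of Γ is a relation among columns of A
  have hrow : ∀ j, ∑ k, Γ j k • Aᵀ k = 0 := by
    intro j
    have hmem : (Γ j) ∈ (Submodule.span ℝ (Set.range fun j => Γ j) : Set (Fin m → ℝ)) :=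
      Submodule.subset_span ⟨j, rfl⟩
    rw [hspan] at hmem
    exact hmem
  have hnm : n ≤ m := by
    have h := A.rank_le_card_width
    rw [hA] at h; simpa using h
  -- kernel of Γ equals row space of A
  have hVW : LinearMap.range (Aᵀ).mulVecLin = LinearMap.ker Γ.mulVecLin := by
    apply Submodule.eq_of_le_of_finrank_eq
    · rintro _ ⟨x, rfl⟩
      simp only [LinearMap.mem_ker, mulVecLin_apply]
      rw [Matrix.mulVec_mulVec]
      have hzero : Γ * Aᵀ = 0 := by
        ext j r
        have h := congrFun (hrow j) r
        simpa [Matrix.mul_apply, Finset.sum_apply, mul_comm] using h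
      rw [hzero, Matrix.zero_mulVec]
    · have h1 : Module.finrank ℝ ↥(LinearMap.range (Aᵀ).mulVecLin) = n := by
        have : (Aᵀ).rank = n := by rw [Matrix.rank_transpose, hA]
        exact this
      have h2 := LinearMap.finrank_range_add_finrank_ker Γ.mulVecLin
      have h3 : Module.finrank ℝ ↥(LinearMap.range Γ.mulVecLin) = m - n := hΓrank
      rw [h3, Module.finrank_pi] at h2
      simp only [Fintype.card_fin] at h2
      rw [h1]
      omega
  -- the level set equation gives Γ (c - b) = 0
  set c : Fin m → ℝ := fun k => Complex.normSq (z k) with hc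
  have hmv : ∀ u : Fin m → ℝ, Γ.mulVec u = ∑ k, u k • Γᵀ k := by
    intro u
    ext j
    simp [Matrix.mulVec, dotProduct, Finset.sum_apply, mul_comm]
  have hker : (c - b) ∈ LinearMap.ker Γ.mulVecLin := by
    simp only [LinearMap.mem_ker, mulVecLin_apply, Matrix.mulVec_sub]
    rw [hmv c, hz, sub_self]
  rw [← hVW] at hker
  obtain ⟨x, hx⟩ := hker
  have hxk : ∀ k, (∑ r, A r k * x r) + b k = c k := by
    intro k
    have h := congrFun hx k
    simp only [mulVecLin_apply, Pi.sub_apply] at h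
    have h2 : (Aᵀ).mulVec x k = ∑ r, A r k * x r := by
      simp [Matrix.mulVec, dotProduct, Matrix.transpose_apply]
    rw [h2] at h
    linarith
  have hxP : ∀ k, 0 ≤ (∑ r, A r k * x r) + b k := by
    intro k; rw [hxk k]; exact Complex.normSq_nonneg _
  have hzero_iff : ∀ k, z k = 0 ↔ (∑ r, A r k * x r) + b k = 0 := by
    intro k
    rw [hxk k, hc]
    exact (Complex.normSq_eq_zero).symm.trans (by rw [eq_comm])
  -- key: the γ_k with z k ≠ 0 "span" : any v orthogonal to them is zero
  have key : ∀ v : Fin (m - n) → ℝ, (∀ k, z k ≠ 0 → ∑ j, v j * Γ j k = 0) → v = 0 := by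
    intro v hv
    set y : Fin m → ℝ := fun k => ∑ j, v j * Γ j k with hy
    have hy0 : ∑ k, y k • Aᵀ k = 0 := by
      calc ∑ k, y k • Aᵀ k = ∑ k, ∑ j, (v j * Γ j k) • Aᵀ k := by
            simp only [hy, Finset.sum_smul]
        _ = ∑ j, v j • (∑ k, Γ j k • Aᵀ k) := by
            rw [Finset.sum_comm]
            simp [Finset.smul_sum, mul_smul]
        _ = 0 := by simp [hrow]
    -- y vanishes off the zero set of x, and the sum over the zero set kills it
    have hysupp : ∀ k, ¬ ((∑ r, A r k * x r) + b k = 0) → y k = 0 := by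
      intro k hk
      exact hv k (fun h0 => hk ((hzero_iff k).mp h0))
    have hsub : ∑ i : {i : Fin m // (∑ r, A r i * x r) + b i = 0}, y (i : Fin m) • Aᵀ (i : Fin m)
        = 0 := by
      rw [← Finset.sum_subtype (Finset.univ.filter fun i => (∑ r, A r i * x r) + b i = 0)
        (fun i => by simp) (fun i => y i • Aᵀ i)]
      rw [← hy0]
      apply Finset.sum_subset (Finset.filter_subset _ _)
      intro i _ hi
      simp only [Finset.mem_filter, Finset.mem_univ, true_and] at hi
      rw [hysupp i hi, zero_smul]
    have hyz := Fintype.linearIndependent_iff.mp (hsimple x hxP)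
      (fun i => y (i : Fin m)) hsub
    have hyall : y = 0 := by
      funext k
      by_cases hk : (∑ r, A r k * x r) + b k = 0
      · exact hyz ⟨k, hk⟩
      · exact hysupp k hk
    have hvz := Fintype.linearIndependent_iff.mp hind v (by
      funext k
      have := congrFun hyall k
      simpa [Finset.sum_apply, hy] using this)
    funext j; exact hvz j
  -- matrix of the γ_k with z k ≠ 0
  set M : Matrix {k : Fin m // z k ≠ 0} (Fin (m - n)) ℝ := fun k j => Γ j (k : Fin m) with hM
  have hMinj : Function.Injective M.mulVecLin := by
    rw [← LinearMap.ker_eq_bot]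
    rw [LinearMap.ker_eq_bot']
    intro v hv0
    apply key v
    intro k hk
    have h := congrFun hv0 ⟨k, hk⟩
    change M.mulVec v ⟨k, hk⟩ = 0 at h
    simpa [hM, Matrix.mulVecLin_apply, Matrix.mulVec, dotProduct, mul_comm] using h
  have hMrank : Mᵀ.rank = m - n := by
    rw [Matrix.rank_transpose]
    have h2 := LinearMap.finrank_range_add_finrank_ker M.mulVecLin
    rw [LinearMap.ker_eq_bot.mpr hMinj] at h2
    rw [finrank_bot] at h2
    simp only [add_zero, Module.finrank_pi, Fintype.card_fin] at h2
    exact h2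
  have hMtop : LinearMap.range Mᵀ.mulVecLin = ⊤ := by
    apply Submodule.eq_top_of_finrank_eq
    rw [show Module.finrank ℝ ↥(LinearMap.range Mᵀ.mulVecLin) = Mᵀ.rank from rfl, hMrank]
    simp [Module.finrank_pi]
  -- compute the derivative
  set pk : (k : Fin m) → (Fin m → ℂ) →L[ℝ] ℂ := fun k => ContinuousLinearMap.proj k with hpk
  have hre : ∀ k, HasFDerivAt (fun w : Fin m → ℂ => (w k).re) (Complex.reCLM.comp (pk k)) z := by
    intro k; exact (Complex.reCLM.comp (pk k)).hasFDerivAt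
  have him : ∀ k, HasFDerivAt (fun w : Fin m → ℂ => (w k).im) (Complex.imCLM.comp (pk k)) z := by
    intro k; exact (Complex.imCLM.comp (pk k)).hasFDerivAt
  set L : (Fin m → ℂ) →L[ℝ] (Fin (m - n) → ℝ) :=
    ∑ k, ContinuousLinearMap.smulRight
      (((z k).re • (Complex.reCLM.comp (pk k)) + (z k).re • (Complex.reCLM.comp (pk k))) +
       ((z k).im • (Complex.imCLM.comp (pk k)) + (z k).im • (Complex.imCLM.comp (pk k))))
      (Γᵀ k) with hL
  have hFeq : (fun z : Fin m → ℂ => ∑ k, Complex.normSq (z k) • Γᵀ k) =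
      (fun w : Fin m → ℂ => ∑ k, ((w k).re * (w k).re + (w k).im * (w k).im) • Γᵀ k) := by
    funext w
    simp [Complex.normSq_apply]
  have hF : HasFDerivAt
      (fun w : Fin m → ℂ => ∑ k, ((w k).re * (w k).re + (w k).im * (w k).im) • Γᵀ k) L z :=
    HasFDerivAt.fun_sum (fun k _ => (((hre k).mul (hre k)).add ((him k).mul (him k))).smul_const _)
  rw [hFeq, hF.fderiv]
  -- explicit formula for L
  have hLapp : ∀ w : Fin m → ℂ, L w =
      ∑ k, (2 * ((z k).re * (w k).re + (z k).im * (w k).im)) • Γᵀ k := by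
    intro w
    rw [hL]
    simp only [ContinuousLinearMap.coe_sum', Finset.sum_apply,
      ContinuousLinearMap.smulRight_apply, ContinuousLinearMap.add_apply,
      ContinuousLinearMap.smul_apply, ContinuousLinearMap.comp_apply,
      ContinuousLinearMap.proj_apply, Complex.reCLM_apply, Complex.imCLM_apply, smul_eq_mul,
      hpk]
    apply Finset.sum_congr rfl
    intro k _
    congr 1
    ring
  -- surjectivity
  intro u
  have hu : u ∈ LinearMap.range Mᵀ.mulVecLin := by rw [hMtop]; trivial
  obtain ⟨t, ht⟩ := hu
  set g : Fin m → ℝ := fun k => if h : z k ≠ 0 then t ⟨k, h⟩ / (2 * Complex.normSq (z k))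
    else 0 with hg
  refine ⟨fun k => (g k : ℂ) * z k, ?_⟩
  rw [hLapp]
  have hterm : ∀ k, (2 * ((z k).re * ((g k : ℂ) * z k).re + (z k).im * ((g k : ℂ) * z k).im))
      • Γᵀ k = (if h : z k ≠ 0 then t ⟨k, h⟩ • Γᵀ k else 0) := by
    intro k
    by_cases h : z k ≠ 0
    · rw [dif_pos h]
      have hns : Complex.normSq (z k) ≠ 0 := by
        exact (Complex.normSq_pos.mpr h).ne'
      congr 1
      have h1 : ((g k : ℂ) * z k).re = g k * (z k).re := by
        simp [Complex.mul_re]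
      have h2 : ((g k : ℂ) * z k).im = g k * (z k).im := by
        simp [Complex.mul_im]
      rw [h1, h2]
      have h3 : 2 * ((z k).re * (g k * (z k).re) + (z k).im * (g k * (z k).im))
          = 2 * g k * Complex.normSq (z k) := by
        rw [Complex.normSq_apply]; ring
      rw [h3, hg]
      simp only [dif_pos h]
      field_simp
    · push_neg at h
      rw [dif_neg (by simpa using h)]
      rw [h]
      simp
  rw [Finset.sum_congr rfl (fun k _ => hterm k)]
  -- now the dite sum equals Mᵀ.mulVec t = u
  rw [← ht]
  have hsum : ∑ k, (if h : z k ≠ 0 then t ⟨k, h⟩ • Γᵀ k else 0) =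
      ∑ k : {k : Fin m // z k ≠ 0}, t k • Γᵀ (k : Fin m) := by
    calc ∑ k, (if h : z k ≠ 0 then t ⟨k, h⟩ • Γᵀ k else 0)
        = ∑ k ∈ Finset.univ.filter (fun k => z k ≠ 0),
            (if h : z k ≠ 0 then t ⟨k, h⟩ • Γᵀ k else 0) := by
          symm
          apply Finset.sum_subset (Finset.filter_subset _ _)
          intro i _ hi
          simp only [Finset.mem_filter, Finset.mem_univ, true_and] at hi
          rw [dif_neg hi]
      _ = ∑ k : {k : Fin m // z k ≠ 0},
            (if h : z (k : Fin m) ≠ 0 then t ⟨(k : Fin m), h⟩ • Γᵀ (k : Fin m) else 0) :=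
          Finset.sum_subtype _ (fun k => by simp) _
      _ = ∑ k : {k : Fin m // z k ≠ 0}, t k • Γᵀ (k : Fin m) := by
          apply Finset.sum_congr rfl
          intro k _
          rw [dif_pos k.2]
  rw [hsum]
  ext j
  simp [Matrix.mulVecLin_apply, Matrix.mulVec, Matrix.vecMul, dotProduct, hM,
    Finset.sum_apply, Matrix.transpose_apply, mul_comm]
  exact Finset.sum_congr rfl (fun c _ => mul_comm _ _)
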